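/- Let (x_n) be a real sequence satisfying x_{n+1} = 2 x_n x_{n-1} - x_{n-2}. If for some n one has |x_{n+1}| > 1, |x_n| > 1, and |x_{n+1} x_n| > |x_{n-1}|, then |x_k| > 1 for all k ≥ n, and in fact |x_k| → ∞ (the sequence is unbounded). -/
import Mathlib


open Filter

/-- Escape criterion for the Fibonacci trace map `x_{n+1} = 2 x_n x_{n-1} - x_{n-2}`:
if for some `n` one has `|x_{n+1}| > 1`, `|x_n| > 1` and `|x_{n+1} x_n| > |x_{n-1}|`,
then `|x_k| > 1` for all `k ≥ n` and `|x_k| → ∞`. -/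
theorem trace_map_escape (x : ℕ → ℝ)
    (hrec : ∀ n : ℕ, x (n + 3) = 2 * x (n + 2) * x (n + 1) - x n)
    (n : ℕ)
    (h1 : 1 < |x (n + 2)|) (h2 : 1 < |x (n + 1)|) (h3 : |x n| < |x (n + 2) * x (n + 1)|) :
    (∀ k ≥ n + 1, 1 < |x k|) ∧ Tendsto (fun k => |x k|) atTop atTop := by
  -- the key invariant, propagated by induction
  have inv : ∀ m : ℕ, 1 < |x (n + m + 1)| ∧ 1 < |x (n + m + 2)| ∧
      |x (n + m)| < |x (n + m + 2)| * |x (n + m + 1)| := by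
    intro m
    induction m with
    | zero =>
      refine ⟨h2, h1, ?_⟩
      rw [abs_mul] at h3; exact h3
    | succ m ih =>
      obtain ⟨ha, hb, hd⟩ := ih
      have hx3 : x (n + m + 3) = 2 * x (n + m + 2) * x (n + m + 1) - x (n + m) := hrec (n + m)
      have htri : |2 * x (n + m + 2) * x (n + m + 1)| - |x (n + m)| ≤ |x (n + m + 3)| := by
        rw [hx3]; exact abs_sub_abs_le_abs_sub _ _
      have habs : |2 * x (n + m + 2) * x (n + m + 1)| =
          2 * (|x (n + m + 2)| * |x (n + m + 1)|) := by
        rw [abs_mul, abs_mul]; simp [abs_of_nonneg]; ring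
      have key : |x (n + m + 2)| * |x (n + m + 1)| < |x (n + m + 3)| := by
        nlinarith [htri, habs]
      have e1 : n + (m + 1) + 1 = n + m + 2 := by ring
      have e2 : n + (m + 1) + 2 = n + m + 3 := by ring
      have e3 : n + (m + 1) = n + m + 1 := by ring
      rw [e1, e2, e3]
      refine ⟨hb, ?_, ?_⟩
      · nlinarith
      · nlinarith [abs_nonneg (x (n + m + 1)), abs_nonneg (x (n + m + 3))]
  have grow : ∀ m : ℕ, |x (n + m + 2)| * |x (n + m + 1)| < |x (n + m + 3)| := by
    intro m
    obtain ⟨ha, hb, _⟩ := inv m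
    obtain ⟨_, _, hd⟩ := inv (m + 1)
    have e1 : n + (m + 1) + 1 = n + m + 2 := by ring
    have e2 : n + (m + 1) + 2 = n + m + 3 := by ring
    have e3 : n + (m + 1) = n + m + 1 := by ring
    rw [e1, e2, e3] at hd
    -- hd is not directly what we want; rederive from recurrence instead
    have hx3 : x (n + m + 3) = 2 * x (n + m + 2) * x (n + m + 1) - x (n + m) := hrec (n + m)
    have htri : |2 * x (n + m + 2) * x (n + m + 1)| - |x (n + m)| ≤ |x (n + m + 3)| := by
      rw [hx3]; exact abs_sub_abs_le_abs_sub _ _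
    have habs : |2 * x (n + m + 2) * x (n + m + 1)| =
        2 * (|x (n + m + 2)| * |x (n + m + 1)|) := by
      rw [abs_mul, abs_mul]; simp [abs_of_nonneg]; ring
    obtain ⟨_, _, hd₀⟩ := inv m
    nlinarith [htri, habs]
  set c := |x (n + 2)| with hc
  have hc1 : 1 < c := h1
  have hc0 : 0 < c := by linarith
  -- monotone lower bound c ≤ |x (n+m+2)|
  have monoc : ∀ m : ℕ, c ≤ |x (n + m + 2)| := by
    intro m
    induction m with
    | zero => simp [hc]
    | succ m ih =>
      obtain ⟨ha, hb, _⟩ := inv m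
      have := grow m
      have e2 : n + (m + 1) + 2 = n + m + 3 := by ring
      rw [e2]
      nlinarith
  -- geometric lower bound
  have lb : ∀ m : ℕ, c ^ m ≤ |x (n + m + 2)| := by
    intro m
    induction m with
    | zero => simp; linarith
    | succ m ih =>
      have e2 : n + (m + 1) + 2 = n + m + 3 := by ring
      rw [e2, pow_succ]
      obtain ⟨ha, hb, _⟩ := inv m
      have hg := grow m
      cases m with
      | zero =>
        simp only [pow_zero, one_mul]
        have : n + 0 + 2 = n + 2 := by ring
        rw [this] at hg hb
        have hn1 : n + 0 + 1 = n + 1 := by ring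
        rw [hn1] at ha
        nlinarith
      | succ m' =>
        have hcle : c ≤ |x (n + (m' + 1) + 1)| := by
          have := monoc m'
          have e : n + m' + 2 = n + (m' + 1) + 1 := by ring
          rwa [e] at this
        have hpow : (0:ℝ) < c ^ (m' + 1) := pow_pos hc0 _
        nlinarith [monoc m']
  constructor
  · intro k hk
    obtain ⟨m, rfl⟩ : ∃ m, k = n + m + 1 := ⟨k - n - 1, by omega⟩
    exact (inv m).1
  · have hpow : Tendsto (fun k : ℕ => c ^ (k - (n + 2))) atTop atTop :=
      (tendsto_pow_atTop_atTop_of_one_lt hc1).comp (tendsto_sub_atTop_nat (n + 2))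
    refine tendsto_atTop_mono' atTop ?_ hpow
    filter_upwards [eventually_ge_atTop (n + 2)] with k hk
    obtain ⟨m, rfl⟩ : ∃ m, k = n + m + 2 := ⟨k - n - 2, by omega⟩
    have : n + m + 2 - (n + 2) = m := by omega
    rw [this]
    exact lb m
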